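/- Let λ > 0 be real, δ ∈ (0, 1), and Δ ≥ 1 a natural number. If t is a natural number with t ≥ Δ + λ·log(2/δ) and Δ ≤ t, then the truncated shifted discrete Laplace distribution places mass at most δ/2 on each extreme region: Σ_{c=0}^{Δ-1} f(c) ≤ δ/2 and Σ_{c=2t-Δ+1}^{2t} f(c) ≤ δ/2, where f(c) = exp(-|c - t|/λ)/A and A = Σ_{c=0}^{2t} exp(-|c - t|/λ). -/

import Mathlib

open Finset Real

/-- If `t ≥ Δ + λ·log(2/δ)` and `Δ ≤ t`, the truncated shifted discrete Laplace
distribution places mass at most `δ/2` on each extreme region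
`{0, …, Δ-1}` and `{2t-Δ+1, …, 2t}`. -/
theorem tsdlap_extreme_mass (lam : ℝ) (hlam : 0 < lam) (δ : ℝ)
    (hδ : δ ∈ Set.Ioo (0 : ℝ) 1) (Δ : ℕ) (hΔ : 1 ≤ Δ) (t : ℕ)
    (ht : (Δ : ℝ) + lam * Real.log (2 / δ) ≤ t) (hΔt : Δ ≤ t) :
    (∑ c ∈ Finset.range Δ,
        Real.exp (-|(c : ℝ) - t| / lam) /
          (∑ c' ∈ Finset.range (2 * t + 1), Real.exp (-|(c' : ℝ) - t| / lam))
      ≤ δ / 2) ∧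
    (∑ c ∈ Finset.Icc (2 * t - Δ + 1) (2 * t),
        Real.exp (-|(c : ℝ) - t| / lam) /
          (∑ c' ∈ Finset.range (2 * t + 1), Real.exp (-|(c' : ℝ) - t| / lam))
      ≤ δ / 2) := by
  obtain ⟨hδ0, hδ1⟩ := hδ
  set A := ∑ c' ∈ Finset.range (2 * t + 1), Real.exp (-|(c' : ℝ) - t| / lam) with hA
  have ht0 : t ∈ Finset.range (2 * t + 1) := by
    simp only [Finset.mem_range]; omega
  have hA1 : (1 : ℝ) ≤ A := by
    have h := Finset.single_le_sum
      (f := fun c' : ℕ => Real.exp (-|(c' : ℝ) - t| / lam))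
      (fun i _ => (Real.exp_pos _).le) ht0
    simpa using h
  have hApos : (0 : ℝ) < A := lt_of_lt_of_le one_pos hA1
  -- key bound on the exponential factor
  have hH : Real.exp (-((t : ℝ) - Δ) / lam) ≤ δ / 2 := by
    have hlog : Real.log (δ / 2) = -Real.log (2 / δ) := by
      rw [← Real.log_inv]
      congr 1
      field_simp
    have h2 : -(((t : ℝ) - Δ) / lam) ≤ Real.log (δ / 2) := by
      rw [hlog, neg_le_neg_iff, le_div_iff₀ hlam]
      nlinarith [ht]
    calc Real.exp (-((t : ℝ) - Δ) / lam)
        ≤ Real.exp (Real.log (δ / 2)) := by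
          apply Real.exp_le_exp.mpr
          rw [neg_div]
          exact h2
      _ = δ / 2 := Real.exp_log (by positivity)
  -- bound for the left-region numerator
  have hsum1 : ∑ c ∈ Finset.range Δ, Real.exp (-|(c : ℝ) - t| / lam) ≤ (δ / 2) * A := by
    have step : ∀ c ∈ Finset.range Δ,
        Real.exp (-|(c : ℝ) - t| / lam)
          = Real.exp (-((t : ℝ) - Δ) / lam) *
            Real.exp (-|(((t - Δ) + c : ℕ) : ℝ) - t| / lam) := by
      intro c hc
      rw [Finset.mem_range] at hc
      have hct : (c : ℝ) < t := by exact_mod_cast lt_of_lt_of_le hc hΔt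
      have hcΔ : (c : ℝ) < Δ := by exact_mod_cast hc
      have h1 : |(c : ℝ) - t| = (t : ℝ) - c := by
        rw [abs_sub_comm, abs_of_nonneg (by linarith)]
      have h2 : (((t - Δ) + c : ℕ) : ℝ) = (t : ℝ) - Δ + c := by
        push_cast [Nat.cast_sub hΔt]
        ring
      have h3 : |(t : ℝ) - Δ + c - t| = (Δ : ℝ) - c := by
        have : (t : ℝ) - Δ + c - t = -((Δ : ℝ) - c) := by ring
        rw [this, abs_neg, abs_of_nonneg (by linarith)]
      rw [h1, h2, h3, ← Real.exp_add]
      congr 1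
      field_simp
      ring
    have hshift : ∑ c ∈ Finset.range Δ,
        Real.exp (-|(((t - Δ) + c : ℕ) : ℝ) - t| / lam)
        = ∑ c ∈ Finset.Ico (t - Δ) t,
            Real.exp (-|(c : ℝ) - t| / lam) := by
      rw [Finset.sum_Ico_eq_sum_range, Nat.sub_sub_self hΔt]
    have hsub : ∑ c ∈ Finset.Ico (t - Δ) t, Real.exp (-|(c : ℝ) - t| / lam) ≤ A := by
      rw [hA]
      apply Finset.sum_le_sum_of_subset_of_nonneg
      · intro x hx
        simp only [Finset.mem_Ico] at hx
        simp only [Finset.mem_range]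
        omega
      · intro i _ _
        exact (Real.exp_pos _).le
    calc ∑ c ∈ Finset.range Δ, Real.exp (-|(c : ℝ) - t| / lam)
        = Real.exp (-((t : ℝ) - Δ) / lam) *
            ∑ c ∈ Finset.range Δ, Real.exp (-|(((t - Δ) + c : ℕ) : ℝ) - t| / lam) := by
          rw [Finset.sum_congr rfl step, Finset.mul_sum]
      _ ≤ (δ / 2) * A := by
          apply mul_le_mul hH _ _ (by linarith)
          · rw [hshift]; exact hsub
          · exact Finset.sum_nonneg fun i _ => (Real.exp_pos _).le
  -- the right-region sum equals the left-region sum by symmetry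
  have heq : ∑ c ∈ Finset.Icc (2 * t - Δ + 1) (2 * t), Real.exp (-|(c : ℝ) - t| / lam)
      = ∑ c ∈ Finset.range Δ, Real.exp (-|(c : ℝ) - t| / lam) := by
    apply Finset.sum_nbij' (fun c => 2 * t - c) (fun c => 2 * t - c)
    · intro a ha
      simp only [Finset.mem_Icc] at ha
      simp only [Finset.mem_range]
      omega
    · intro a ha
      simp only [Finset.mem_range] at ha
      simp only [Finset.mem_Icc]
      omega
    · intro a ha
      simp only [Finset.mem_Icc] at ha
      omega
    · intro a ha
      simp only [Finset.mem_range] at ha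
      omega
    · intro a ha
      simp only [Finset.mem_Icc] at ha
      have hcast : ((2 * t - a : ℕ) : ℝ) = 2 * (t : ℝ) - a := by
        push_cast [Nat.cast_sub (by omega : a ≤ 2 * t)]
        ring
      rw [hcast]
      congr 1
      have : 2 * (t : ℝ) - a - t = -((a : ℝ) - t) := by ring
      rw [this, abs_neg]
  constructor
  · rw [← Finset.sum_div, div_le_iff₀ hApos]
    exact hsum1
  · rw [← Finset.sum_div, div_le_iff₀ hApos, heq]
    exact hsum1
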